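/- (Continuity of fractional velocity forces vanishing) Let 0 < β < 1. Suppose υ⁺_β f(y) exists finitely for all y in a right neighborhood of x and that the map y ↦ υ⁺_β f(y) is right-continuous at x. Then υ⁺_β f(x) = 0. -/

import Mathlib

open Filter Topology Set

open MeasureTheory in

lemma no_uniform_fractional_growth (g : ℝ → ℝ) (a b m β : ℝ)
    (hβ : 0 < β) (hβ1 : β < 1) (hm : 0 < m) (hab : a < b)
    (H : ∀ y ∈ Icc a b, ∃ h₀ > (0:ℝ), ∀ h : ℝ, 0 < h → h ≤ h₀ →
      m * h ^ β ≤ g (y + h) - g y) : False := by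
  classical
  set E : ℕ → Set ℝ := fun n =>
    {y | y ∈ Icc a b ∧ ∀ h : ℝ, 0 < h → h ≤ 1 / (n + 1) → m * h ^ β ≤ g (y + h) - g y} with hE
  set S : ℕ × ℕ → Set ℝ := fun p =>
    E p.1 ∩ Icc (a + p.2 * (1 / (p.1 + 1))) (a + (p.2 + 1) * (1 / (p.1 + 1))) with hS
  have hcover : Icc a b ⊆ ⋃ p : ℕ × ℕ, S p := by
    intro y hy
    obtain ⟨h₀, h₀pos, hh₀⟩ := H y hy
    obtain ⟨n, hn⟩ := exists_nat_one_div_lt h₀pos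
    have hupos : (0:ℝ) < 1 / ((n:ℝ) + 1) := by positivity
    have hyE : y ∈ E n := ⟨hy, fun h hh hh' => hh₀ h hh (hh'.trans hn.le)⟩
    have hya : a ≤ y := hy.1
    refine mem_iUnion.2 ⟨⟨n, ⌊(y - a) / (1 / (n + 1))⌋₊⟩, hyE, ?_, ?_⟩
    · have h1 : (⌊(y - a) / (1 / ((n:ℝ) + 1))⌋₊ : ℝ) ≤ (y - a) / (1 / (n + 1)) :=
        Nat.floor_le (div_nonneg (by linarith) hupos.le)
      have := mul_le_mul_of_nonneg_right h1 hupos.le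
      rw [div_mul_cancel₀ (y - a) hupos.ne'] at this
      simp only []
      linarith
    · have h2 : (y - a) / (1 / ((n:ℝ) + 1)) < ⌊(y - a) / (1 / ((n:ℝ) + 1))⌋₊ + 1 :=
        Nat.lt_floor_add_one _
      have := mul_lt_mul_of_pos_right h2 hupos
      rw [div_mul_cancel₀ (y - a) hupos.ne'] at this
      simp only []
      nlinarith
  have hpos : ∃ p : ℕ × ℕ, volume (S p) ≠ 0 := by
    by_contra hc
    push_neg at hc
    have : volume (Icc a b) = 0 :=
      measure_mono_null hcover (measure_iUnion_null fun p => hc p)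
    rw [Real.volume_Icc] at this
    exact (ENNReal.ofReal_pos.2 (by linarith)).ne' this
  obtain ⟨⟨n, k⟩, hSvol⟩ := hpos
  set s : Set ℝ := S (n, k) with hs
  have hupos : (0:ℝ) < 1 / ((n:ℝ) + 1) := by positivity
  have hineq : ∀ y ∈ s, ∀ z ∈ s, y < z → m * (z - y) ^ β ≤ g z - g y := by
    intro y hy z hz hyz
    have hy2 := hy.2
    have hz2 := hz.2
    simp only [hS, mem_Icc] at hy2 hz2
    have h1 : z - y ≤ 1 / ((n:ℝ) + 1) := by
      have e : ((k:ℝ) + 1) * (1 / ((n:ℝ) + 1)) = (k:ℝ) * (1 / ((n:ℝ) + 1)) + 1 / ((n:ℝ)+1) := by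
        ring
      have := hz2.2
      rw [e] at this
      linarith [hy2.1]
    have h2 := hy.1.2 (z - y) (by linarith) h1
    have e2 : y + (z - y) = z := by ring
    rwa [e2] at h2
  have hmono : MonotoneOn g s := by
    intro y hy z hz hyz
    rcases eq_or_lt_of_le hyz with rfl | h
    · exact le_rfl
    · have h1 := hineq y hy z hz h
      have hp : (0:ℝ) < (z - y) ^ β := Real.rpow_pos_of_pos (by linarith) β
      nlinarith
  have hdiff := hmono.ae_differentiableWithinAt_of_mem
  set Bad : Set ℝ := {y | y ∈ s ∧ ∃ q : ℚ, y < (q:ℝ) ∧ s ∩ Ioo y (q:ℝ) = ∅} with hBad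
  have hBadc : Bad.Countable := by
    have hsub : Bad ⊆ ⋃ q : ℚ, {y | y ∈ s ∧ y < (q:ℝ) ∧ s ∩ Ioo y (q:ℝ) = ∅} := by
      rintro y ⟨hy, q, hq1, hq2⟩; exact mem_iUnion.2 ⟨q, hy, hq1, hq2⟩
    refine Set.Countable.mono hsub (countable_iUnion fun q => ?_)
    apply Set.Subsingleton.countable
    rintro y₁ ⟨hy₁, hlt₁, hempty₁⟩ y₂ ⟨hy₂, hlt₂, hempty₂⟩
    by_contra hne
    rcases lt_or_gt_of_ne hne with h | h
    · exact absurd (show y₂ ∈ s ∩ Ioo y₁ (q:ℝ) from ⟨hy₂, h, hlt₂⟩)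
        (by rw [hempty₁]; exact notMem_empty y₂)
    · exact absurd (show y₁ ∈ s ∩ Ioo y₂ (q:ℝ) from ⟨hy₁, h, hlt₁⟩)
        (by rw [hempty₂]; exact notMem_empty y₁)
  have hBad0 : volume Bad = 0 := hBadc.measure_zero _
  have hkey : ∃ y ∈ s, DifferentiableWithinAt ℝ g s y ∧ y ∉ Bad := by
    by_contra hc
    push_neg at hc
    have h0 : volume {y | ¬(y ∈ s → DifferentiableWithinAt ℝ g s y)} = 0 := by
      have := hdiff
      rw [ae_iff] at this
      exact this
    have hsub : s ⊆ {y | ¬(y ∈ s → DifferentiableWithinAt ℝ g s y)} ∪ Bad := by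
      intro y hy
      by_cases hd : DifferentiableWithinAt ℝ g s y
      · exact Or.inr (hc y hy hd)
      · exact Or.inl (fun h => hd (h hy))
    exact hSvol (measure_mono_null hsub (measure_union_null h0 hBad0))
  obtain ⟨y, hys, hydiff, hynotbad⟩ := hkey
  have hacc : (𝓝[s ∩ Ioi y] y).NeBot := by
    rw [← mem_closure_iff_nhdsWithin_neBot, Metric.mem_closure_iff]
    intro ε hε
    obtain ⟨q, hq1, hq2⟩ := exists_rat_btwn (show y < y + ε by linarith)
    have hne : (s ∩ Ioo y (q:ℝ)).Nonempty := by
      rcases Set.eq_empty_or_nonempty (s ∩ Ioo y (q:ℝ)) with he | hne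
      · exact absurd ⟨hys, q, hq1, he⟩ hynotbad
      · exact hne
    obtain ⟨z, hzs, hz1, hz2⟩ := hne
    exact ⟨z, ⟨hzs, hz1⟩, by rw [Real.dist_eq, abs_sub_lt_iff]; constructor <;> linarith⟩
  set d : ℝ := derivWithin g s y with hd
  have ht : Tendsto (slope g y) (𝓝[s ∩ Ioi y] y) (𝓝 d) := by
    have h1 := hasDerivWithinAt_iff_tendsto_slope.1 hydiff.hasDerivWithinAt
    exact h1.mono_left (nhdsWithin_mono _ (fun z hz => ⟨hz.1, hz.2.ne'⟩))
  have hub : ∀ᶠ z in 𝓝[s ∩ Ioi y] y, slope g y z < d + 1 :=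
    ht.eventually_lt_const (lt_add_one d)
  -- lower bound blows up
  have h1 : Tendsto (fun z : ℝ => z - y) (𝓝[s ∩ Ioi y] y) (𝓝[>] 0) := by
    rw [tendsto_nhdsWithin_iff]
    constructor
    · have : Tendsto (fun z : ℝ => z - y) (𝓝 y) (𝓝 (y - y)) :=
        (continuous_id.sub continuous_const).tendsto y
      rw [sub_self] at this
      exact this.mono_left nhdsWithin_le_nhds
    · filter_upwards [self_mem_nhdsWithin] with z hz
      exact mem_Ioi.2 (sub_pos.2 (mem_Ioi.1 hz.2))
  have h2 : Tendsto (fun t : ℝ => t ^ (β - 1)) (𝓝[>] (0:ℝ)) atTop := by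
    have h3 : Tendsto (fun t : ℝ => t ^ (1 - β)) (𝓝[>] (0:ℝ)) (𝓝[>] 0) := by
      rw [tendsto_nhdsWithin_iff]
      constructor
      · have hc : ContinuousAt (fun t : ℝ => t ^ (1 - β)) 0 :=
          Real.continuousAt_rpow_const 0 (1 - β) (Or.inr (by linarith))
        have := hc.tendsto.mono_left (nhdsWithin_le_nhds (s := Ioi (0:ℝ)))
        rwa [Real.zero_rpow (by linarith : (1:ℝ) - β ≠ 0)] at this
      · filter_upwards [self_mem_nhdsWithin] with t ht
        exact Real.rpow_pos_of_pos ht _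
    have h4 : Tendsto (fun t : ℝ => (t ^ (1 - β))⁻¹) (𝓝[>] (0:ℝ)) atTop :=
      tendsto_inv_nhdsGT_zero.comp h3
    refine h4.congr' ?_
    filter_upwards [self_mem_nhdsWithin] with t ht
    rw [← Real.rpow_neg (le_of_lt ht)]
    ring_nf
  have h5 : Tendsto (fun z : ℝ => m * (z - y) ^ (β - 1)) (𝓝[s ∩ Ioi y] y) atTop :=
    (h2.comp h1).const_mul_atTop hm
  have hlb : ∀ᶠ z in 𝓝[s ∩ Ioi y] y, d + 1 < slope g y z := by
    filter_upwards [h5.eventually_gt_atTop (d + 1), self_mem_nhdsWithin] with z hz1 hz2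
    have hzy : 0 < z - y := sub_pos.2 hz2.2
    have hg : m * (z - y) ^ β ≤ g z - g y := hineq y hys z hz2.1 hz2.2
    have hslope : slope g y z = (g z - g y) / (z - y) := slope_def_field g y z
    have e : (z - y) ^ (β - 1) = (z - y) ^ β / (z - y) := by
      rw [Real.rpow_sub hzy, Real.rpow_one]
    have : m * (z - y) ^ (β - 1) ≤ (g z - g y) / (z - y) := by
      rw [e, mul_div_assoc']
      gcongr
    rw [hslope]
    linarith
  obtain ⟨z, hz1, hz2⟩ := (hub.and hlb).exists
  linarith

/-- (Continuity of fractional velocity forces vanishing) Let `0 < β < 1`.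
If `υ⁺_β f(y)` exists finitely (with value `v y`) for all `y` in a right
neighborhood of `x` and `v` is right-continuous at `x`, then `υ⁺_β f(x) = 0`. -/
theorem velocity_zero_of_rightContinuous (f : ℝ → ℝ) (x β : ℝ) (v : ℝ → ℝ)
    (hβ : 0 < β) (hβ1 : β < 1)
    (hvel : ∃ δ > (0:ℝ), ∀ y ∈ Ico x (x + δ),
      Tendsto (fun ε : ℝ => (f (y + ε) - f y) / ε ^ β) (𝓝[>] 0) (𝓝 (v y)))
    (hcont : ContinuousWithinAt v (Ici x) x) :
    v x = 0 := by
  by_contra hv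
  obtain ⟨δ, hδ, hvel'⟩ := hvel
  have habs : 0 < |v x| := abs_pos.2 hv
  have h1 : ∀ᶠ y in 𝓝[Ici x] x, |v y - v x| < |v x| / 2 := by
    have h := Metric.tendsto_nhds.1 hcont (|v x| / 2) (by positivity)
    simpa [Real.dist_eq] using h
  obtain ⟨ε, hε, hball⟩ := Metric.mem_nhdsWithin_iff.1 h1
  set η : ℝ := min ε δ with hη
  have hηpos : 0 < η := lt_min hε hδ
  set a : ℝ := x + η / 2 with ha
  set b : ℝ := x + (3 / 4) * η with hb
  have hab : a < b := by rw [ha, hb]; linarith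
  -- for every y in [a,b] we have both the velocity limit and |v y - v x| < |v x|/2
  have hmem : ∀ y ∈ Icc a b, y ∈ Ico x (x + δ) ∧ |v y - v x| < |v x| / 2 := by
    intro y hy
    have hy1 : x < y := lt_of_lt_of_le (by rw [ha]; linarith) hy.1
    have hy2 : y < x + η := lt_of_le_of_lt hy.2 (by rw [hb]; linarith)
    refine ⟨⟨hy1.le, lt_of_lt_of_le hy2 (by have := min_le_right ε δ; linarith)⟩, ?_⟩
    apply hball
    refine ⟨?_, hy1.le⟩
    rw [Metric.mem_ball, Real.dist_eq, abs_sub_lt_iff]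
    have := min_le_left ε δ
    constructor <;> linarith
  rcases lt_or_gt_of_ne hv with hneg | hpos
  · -- v x < 0 : use g = -f with m = |v x| / 2
    refine no_uniform_fractional_growth (fun t => -f t) a b (|v x| / 2) β hβ hβ1
      (by positivity) hab ?_
    intro y hy
    obtain ⟨hy1, hy2⟩ := hmem y hy
    have htv : Tendsto (fun e : ℝ => (-f (y + e) - -f y) / e ^ β) (𝓝[>] 0) (𝓝 (-v y)) := by
      have := (hvel' y hy1).neg
      refine this.congr (fun e => ?_)
      ring
    have hvy : |v x| / 2 < -v y := by
      rw [abs_of_neg hneg] at hy2 ⊢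
      rw [abs_sub_lt_iff] at hy2
      linarith [hy2.1]
    have hev : ∀ᶠ e in 𝓝[>] (0:ℝ), |v x| / 2 < (-f (y + e) - -f y) / e ^ β :=
      htv.eventually_const_lt hvy
    rw [eventually_iff, mem_nhdsGT_iff_exists_Ioo_subset] at hev
    obtain ⟨u, hu, hsub⟩ := hev
    refine ⟨u / 2, by have hu2 : (0:ℝ) < u := hu; positivity, fun h hh1 hh2 => ?_⟩
    have hq : |v x| / 2 < (-f (y + h) - -f y) / h ^ β := hsub ⟨hh1, by
      have : (0:ℝ) < u := hu; linarith⟩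
    have hpow : (0:ℝ) < h ^ β := Real.rpow_pos_of_pos hh1 β
    have := (lt_div_iff₀ hpow).1 hq
    linarith
  · -- v x > 0 : use g = f with m = v x / 2
    refine no_uniform_fractional_growth f a b (|v x| / 2) β hβ hβ1
      (by positivity) hab ?_
    intro y hy
    obtain ⟨hy1, hy2⟩ := hmem y hy
    have hvy : |v x| / 2 < v y := by
      rw [abs_of_pos hpos] at hy2 ⊢
      rw [abs_sub_lt_iff] at hy2
      linarith [hy2.2]
    have hev : ∀ᶠ e in 𝓝[>] (0:ℝ), |v x| / 2 < (f (y + e) - f y) / e ^ β :=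
      (hvel' y hy1).eventually_const_lt hvy
    rw [eventually_iff, mem_nhdsGT_iff_exists_Ioo_subset] at hev
    obtain ⟨u, hu, hsub⟩ := hev
    refine ⟨u / 2, by have hu2 : (0:ℝ) < u := hu; positivity, fun h hh1 hh2 => ?_⟩
    have hq : |v x| / 2 < (f (y + h) - f y) / h ^ β := hsub ⟨hh1, by
      have : (0:ℝ) < u := hu; linarith⟩
    have hpow : (0:ℝ) < h ^ β := Real.rpow_pos_of_pos hh1 β
    have := (lt_div_iff₀ hpow).1 hq
    linarith
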